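/- Let G be a subgroup of Homeo₊(ℝ) whose action on ℝ is minimal (every G-orbit is dense in ℝ), and let Z be the centralizer of G in Homeo₊(ℝ). Then every nonidentity element of Z acts freely on ℝ (has no fixed point), and Z is abelian. -/

import Mathlib

section CentralizerHelpers

private lemma perm_cont {ζ : Equiv.Perm ℝ} (h : StrictMono ⇑ζ) : Continuous ⇑ζ :=
  (StrictMono.orderIsoOfSurjective ⇑ζ h ζ.surjective).continuous

private lemma perm_apply_inv_self (f : Equiv.Perm ℝ) (x : ℝ) : f (f⁻¹ x) = x :=
  Equiv.apply_symm_apply f x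

private lemma perm_inv_apply_self (f : Equiv.Perm ℝ) (x : ℝ) : f⁻¹ (f x) = x :=
  Equiv.symm_apply_apply f x

private lemma perm_inv_sm {ζ : Equiv.Perm ℝ} (h : StrictMono ⇑ζ) : StrictMono ⇑ζ⁻¹ := by
  intro a b hab
  rw [← h.lt_iff_lt, perm_apply_inv_self, perm_apply_inv_self]; exact hab

/-- The centralizer of `G` inside order-preserving bijections of `ℝ`, as a subgroup. -/
private def Zc (G : Subgroup (Equiv.Perm ℝ)) : Subgroup (Equiv.Perm ℝ) where
  carrier := {ζ | StrictMono ⇑ζ ∧ ∀ g ∈ G, ζ * g = g * ζ}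
  one_mem' := ⟨by simpa using strictMono_id, by intro g hg; rw [one_mul, mul_one]⟩
  mul_mem' := by
    rintro a b ⟨ha1, ha2⟩ ⟨hb1, hb2⟩
    refine ⟨by rw [Equiv.Perm.coe_mul]; exact ha1.comp hb1, ?_⟩
    intro g hg
    rw [mul_assoc, hb2 g hg, ← mul_assoc, ha2 g hg, mul_assoc]
  inv_mem' := by
    rintro a ⟨ha1, ha2⟩
    refine ⟨perm_inv_sm ha1, ?_⟩
    intro g hg
    have := ha2 g hg
    calc a⁻¹ * g = a⁻¹ * g * a * a⁻¹ := by group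
    _ = a⁻¹ * (g * a) * a⁻¹ := by group
    _ = a⁻¹ * (a * g) * a⁻¹ := by rw [← this]
    _ = g * a⁻¹ := by group

variable {G : Subgroup (Equiv.Perm ℝ)}

private lemma mem_Zc {ζ : Equiv.Perm ℝ} :
    ζ ∈ Zc G ↔ StrictMono ⇑ζ ∧ ∀ g ∈ G, ζ * g = g * ζ := Iff.rfl

private lemma Zc_sm {ζ : Equiv.Perm ℝ} (h : ζ ∈ Zc G) : StrictMono ⇑ζ := h.1

variable (hmin : ∀ x : ℝ, Dense {y : ℝ | ∃ g ∈ G, g x = y})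
include hmin

/-- Freeness: an element of the centralizer with a fixed point is the identity. -/
private lemma Zc_free {ζ : Equiv.Perm ℝ} (hζ : ζ ∈ Zc G) {x : ℝ} (hx : ζ x = x) :
    ζ = 1 := by
  have hclosed : IsClosed {y : ℝ | ζ y = y} :=
    isClosed_eq (perm_cont hζ.1) continuous_id
  have hsub : {y : ℝ | ∃ g ∈ G, g x = y} ⊆ {y : ℝ | ζ y = y} := by
    rintro y ⟨g, hg, rfl⟩
    have := hζ.2 g hg
    calc ζ (g x) = (ζ * g) x := rfl
    _ = (g * ζ) x := by rw [this]
    _ = g (ζ x) := rfl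
    _ = g x := by rw [hx]
  have hdense : Dense {y : ℝ | ζ y = y} := (hmin x).mono hsub
  have huniv : {y : ℝ | ζ y = y} = Set.univ := by
    rw [← hclosed.closure_eq]; exact hdense.closure_eq
  ext y
  exact (Set.eq_univ_iff_forall.mp huniv y : ζ y = y).trans (Equiv.Perm.one_apply y).symm

/-- Trichotomy for elements of the centralizer. -/
private lemma Zc_trich {ζ : Equiv.Perm ℝ} (hζ : ζ ∈ Zc G) (hne : ζ ≠ 1) :
    (∀ x, x < ζ x) ∨ (∀ x, ζ x < x) := by
  have hnf : ∀ x, ζ x ≠ x := fun x hx => hne (Zc_free hmin hζ hx)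
  have hf : Continuous fun x : ℝ => ζ x - x := (perm_cont hζ.1).sub continuous_id
  have key : ∀ a b : ℝ, ζ a ≤ a → b ≤ ζ b → False := by
    intro a b ha hb
    have h0 : (0 : ℝ) ∈ Set.Icc (ζ a - a) (ζ b - b) := ⟨by linarith, by linarith⟩
    obtain ⟨c, hc⟩ := intermediate_value_univ a b hf h0
    exact hnf c (by dsimp at hc; linarith)
  by_cases h : ∀ x, x < ζ x
  · exact Or.inl h
  · push_neg at h
    obtain ⟨a, ha⟩ := h
    refine Or.inr fun x => ?_
    rcases lt_or_ge (ζ x) x with h' | h'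
    · exact h'
    · exact absurd (key a x ha h') (fun h => h)

/-- Pointwise comparison extends from the value at `0`. -/
private lemma Zc_le_ext {ζ η : Equiv.Perm ℝ} (hζ : ζ ∈ Zc G) (hη : η ∈ Zc G)
    (h : ζ 0 ≤ η 0) : ∀ x, ζ x ≤ η x := by
  intro x
  set θ : Equiv.Perm ℝ := ζ⁻¹ * η with hθ
  have hθZ : θ ∈ Zc G := mul_mem (inv_mem hζ) hη
  have hθ0 : (0:ℝ) ≤ θ 0 := by
    have : ζ⁻¹ (ζ 0) ≤ ζ⁻¹ (η 0) := (perm_inv_sm hζ.1).monotone h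
    simpa [hθ, Equiv.Perm.mul_apply] using this
  by_cases h1 : θ = 1
  · have : ζ = η := by
      have := h1; rw [hθ] at this
      exact (inv_mul_eq_one.mp this)
    rw [this]
  · rcases Zc_trich hmin hθZ h1 with hup | hdn
    · have : x ≤ θ x := le_of_lt (hup x)
      have h2 : ζ x ≤ ζ (θ x) := hζ.1.monotone this
      have h3 : ζ (θ x) = η x := by
        rw [hθ]; simp [Equiv.Perm.mul_apply]
      rw [h3] at h2; exact h2
    · exact absurd (hdn 0) (not_lt.mpr hθ0)

private lemma Zc_lt_ext {ζ η : Equiv.Perm ℝ} (hζ : ζ ∈ Zc G) (hη : η ∈ Zc G)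
    (h : ζ 0 < η 0) : ∀ x, ζ x < η x := by
  intro x
  refine lt_of_le_of_ne (Zc_le_ext hmin hζ hη h.le x) fun hx => ?_
  have hfix : (ζ⁻¹ * η : Equiv.Perm ℝ) x = x := by
    rw [Equiv.Perm.mul_apply, ← hx, perm_inv_apply_self]
  have := Zc_free hmin (mul_mem (inv_mem hζ) hη) hfix
  have : ζ = η := inv_mul_eq_one.mp this
  rw [this] at h; exact lt_irrefl _ h

/-- Archimedean property: iterates of a fixed-point-free positive element are unbounded. -/
private lemma Zc_arch {ζ : Equiv.Perm ℝ} (hζ : ζ ∈ Zc G) (hup : ∀ x, x < ζ x) (M : ℝ) :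
    ∃ n : ℕ, M < (ζ ^ n : Equiv.Perm ℝ) 0 := by
  by_contra hcon
  push_neg at hcon
  set a : ℕ → ℝ := fun n => (ζ ^ n : Equiv.Perm ℝ) 0 with ha
  have hmonoa : Monotone a := by
    refine monotone_nat_of_le_succ fun n => ?_
    have : (ζ ^ (n+1) : Equiv.Perm ℝ) 0 = ζ ((ζ ^ n : Equiv.Perm ℝ) 0) := by
      rw [pow_succ']; rfl
    rw [ha]; dsimp; rw [this]; exact (hup _).le
  have hbdd : BddAbove (Set.range a) := ⟨M, by rintro y ⟨n, rfl⟩; exact hcon n⟩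
  have hlim : Filter.Tendsto a Filter.atTop (nhds (⨆ n, a n)) :=
    tendsto_atTop_ciSup hmonoa hbdd
  set L := ⨆ n, a n
  have hlim2 : Filter.Tendsto (fun n => a (n + 1)) Filter.atTop (nhds L) :=
    hlim.comp (Filter.tendsto_add_atTop_nat 1)
  have hζa : ∀ n, ζ (a n) = a (n + 1) := by
    intro n
    rw [ha]; dsimp; rw [pow_succ']; rfl
  have hlim3 : Filter.Tendsto (fun n => ζ (a n)) Filter.atTop (nhds (ζ L)) :=
    ((perm_cont hζ.1).tendsto L).comp hlim
  have : ζ L = L := tendsto_nhds_unique (by simpa [hζa] using hlim3) hlim2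
  exact absurd this (ne_of_gt (hup L))

/-- For a fixed-point-free positive `ε` and any `a` in the centralizer, there is a
well-defined "floor" exponent. -/
private lemma Zc_floor {ε a : Equiv.Perm ℝ} (hε : ε ∈ Zc G) (hup : ∀ x, x < ε x)
    (ha : a ∈ Zc G) :
    ∃ m : ℤ, (ε ^ m : Equiv.Perm ℝ) 0 ≤ a 0 ∧ a 0 < (ε ^ (m + 1) : Equiv.Perm ℝ) 0 := by
  have hsm : StrictMono (fun k : ℤ => (ε ^ k : Equiv.Perm ℝ) 0) := by
    refine strictMono_int_of_lt_succ fun k => ?_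
    have h1 : (ε ^ (k+1) : Equiv.Perm ℝ) = ε * ε ^ k := by
      rw [zpow_add_one]; group
    rw [h1, Equiv.Perm.mul_apply]
    exact hup _
  set S : ℤ → Prop := fun k => (ε ^ k : Equiv.Perm ℝ) 0 ≤ a 0 with hS
  obtain ⟨N, hN⟩ := Zc_arch hmin hε hup (a 0)
  have hbdd : ∀ z : ℤ, S z → z ≤ (N : ℤ) := by
    intro z hz
    by_contra hc
    push_neg at hc
    have : (ε ^ (N:ℤ) : Equiv.Perm ℝ) 0 < (ε ^ z : Equiv.Perm ℝ) 0 := hsm hc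
    rw [zpow_natCast] at this
    exact absurd (lt_of_lt_of_le (lt_trans hN this) hz) (lt_irrefl _)
  have hinh : ∃ z, S z := by
    obtain ⟨N2, hN2⟩ := Zc_arch hmin hε hup (a⁻¹ 0)
    refine ⟨-(N2 : ℤ), ?_⟩
    have hεN2 : (ε ^ (N2:ℤ) : Equiv.Perm ℝ) ∈ Zc G := zpow_mem hε _
    have hptw : ∀ x, a⁻¹ x < (ε ^ (N2:ℤ) : Equiv.Perm ℝ) x := by
      refine Zc_lt_ext hmin (inv_mem ha) hεN2 ?_
      rw [zpow_natCast]; exact hN2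
    have h1 := hptw ((ε ^ (-(N2:ℤ)) : Equiv.Perm ℝ) 0)
    have h2 : (ε ^ (N2:ℤ) : Equiv.Perm ℝ) ((ε ^ (-(N2:ℤ)) : Equiv.Perm ℝ) 0) = 0 := by
      rw [← Equiv.Perm.mul_apply, ← zpow_add]
      simp
    rw [h2] at h1
    have h3 : a (a⁻¹ ((ε ^ (-(N2:ℤ)) : Equiv.Perm ℝ) 0)) < a 0 := ha.1 h1
    rw [perm_apply_inv_self] at h3
    exact h3.le
  obtain ⟨m, hm, hmax⟩ := Int.exists_greatest_of_bdd ⟨(N:ℤ), hbdd⟩ hinh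
  refine ⟨m, hm, ?_⟩
  by_contra hc
  push_neg at hc
  have := hmax (m + 1) hc
  omega


/-- Key step: no commutator of centralizer elements can move `0` upward. -/
private lemma Zc_key {a b : Equiv.Perm ℝ} (ha : a ∈ Zc G) (hb : b ∈ Zc G) :
    ¬ (0 < (a⁻¹ * b⁻¹ * a * b : Equiv.Perm ℝ) 0) := by
  intro hδ0
  set δ : Equiv.Perm ℝ := a⁻¹ * b⁻¹ * a * b with hδdef
  have hδZ : δ ∈ Zc G := mul_mem (mul_mem (mul_mem (inv_mem ha) (inv_mem hb)) ha) hb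
  have hδne : δ ≠ 1 := by
    intro h; rw [h] at hδ0; simp at hδ0
  have hδup : ∀ x, x < δ x := by
    rcases Zc_trich hmin hδZ hδne with h | h
    · exact h
    · exact absurd (h 0) (not_lt.mpr hδ0.le)
  by_cases hA : ∃ ε ∈ Zc G, 0 < ε 0 ∧ (ε * ε : Equiv.Perm ℝ) 0 ≤ δ 0
  · -- "no least positive element" style case: bound the commutator by ε².
    obtain ⟨ε, hεZ, hε0, hεδ⟩ := hA
    have hεne : ε ≠ 1 := by intro h; rw [h] at hε0; simp at hε0
    have hεup : ∀ x, x < ε x := by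
      rcases Zc_trich hmin hεZ hεne with h | h
      · exact h
      · exact absurd (h 0) (not_lt.mpr hε0.le)
    obtain ⟨m, hm1, hm2⟩ := Zc_floor hmin hεZ hεup ha
    obtain ⟨n, hn1, hn2⟩ := Zc_floor hmin hεZ hεup hb
    -- (a*b) 0 < ε^(m+n+2) 0
    have hab : (a * b : Equiv.Perm ℝ) 0 < (ε ^ (m + n + 2) : Equiv.Perm ℝ) 0 := by
      have h1 : a (b 0) < a ((ε ^ (n+1) : Equiv.Perm ℝ) 0) := ha.1 hn2
      have h2 : ∀ x, a x < (ε ^ (m+1) : Equiv.Perm ℝ) x :=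
        Zc_lt_ext hmin ha (zpow_mem hεZ _) hm2
      have h3 := h2 ((ε ^ (n+1) : Equiv.Perm ℝ) 0)
      have h4 : (ε ^ (m+1) : Equiv.Perm ℝ) ((ε ^ (n+1) : Equiv.Perm ℝ) 0)
          = (ε ^ (m + n + 2) : Equiv.Perm ℝ) 0 := by
        rw [← Equiv.Perm.mul_apply, ← zpow_add]
        ring_nf
      rw [h4] at h3
      exact lt_trans (by simpa [Equiv.Perm.mul_apply] using h1) h3
    -- ε^(m+n) 0 ≤ (b*a) 0
    have hba : (ε ^ (m + n) : Equiv.Perm ℝ) 0 ≤ (b * a : Equiv.Perm ℝ) 0 := by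
      have h1 : ∀ x, (ε ^ n : Equiv.Perm ℝ) x ≤ b x :=
        Zc_le_ext hmin (zpow_mem hεZ _) hb hn1
      have h2 := h1 ((ε ^ m : Equiv.Perm ℝ) 0)
      have h3 : (ε ^ n : Equiv.Perm ℝ) ((ε ^ m : Equiv.Perm ℝ) 0)
          = (ε ^ (m + n) : Equiv.Perm ℝ) 0 := by
        rw [← Equiv.Perm.mul_apply, ← zpow_add]; ring_nf
      have h4 : b ((ε ^ m : Equiv.Perm ℝ) 0) ≤ b (a 0) := hb.1.monotone hm1
      rw [h3] at h2
      exact le_trans h2 (by simpa [Equiv.Perm.mul_apply] using h4)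
    -- hence δ 0 < (ε*ε) 0
    have hbaZ : (b * a : Equiv.Perm ℝ) ∈ Zc G := mul_mem hb ha
    have hδeq : δ 0 = ((b * a)⁻¹ : Equiv.Perm ℝ) ((a * b : Equiv.Perm ℝ) 0) := by
      simp [hδdef, Equiv.Perm.mul_apply]
    have step1 : δ 0 < ((b * a)⁻¹ : Equiv.Perm ℝ) ((ε ^ (m + n + 2) : Equiv.Perm ℝ) 0) := by
      rw [hδeq]; exact perm_inv_sm hbaZ.1 hab
    have step2 : ((b * a)⁻¹ : Equiv.Perm ℝ) ((ε ^ (m + n + 2) : Equiv.Perm ℝ) 0)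
        ≤ (ε * ε : Equiv.Perm ℝ) 0 := by
      set y := (ε ^ (m + n + 2) : Equiv.Perm ℝ) 0
      have h1 : ∀ x, (ε ^ (m + n) : Equiv.Perm ℝ) x ≤ (b * a : Equiv.Perm ℝ) x :=
        Zc_le_ext hmin (zpow_mem hεZ _) hbaZ hba
      have h2 := h1 (((b * a)⁻¹ : Equiv.Perm ℝ) y)
      rw [perm_apply_inv_self] at h2
      have h3 := ((zpow_mem hεZ (-(m + n)) : (ε ^ (-(m+n)) : Equiv.Perm ℝ) ∈ Zc G)).1.monotone h2
      have h4 : (ε ^ (-(m+n)) : Equiv.Perm ℝ) ((ε ^ (m + n) : Equiv.Perm ℝ)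
          (((b * a)⁻¹ : Equiv.Perm ℝ) y)) = ((b * a)⁻¹ : Equiv.Perm ℝ) y := by
        rw [← Equiv.Perm.mul_apply, ← zpow_add, show -(m+n)+(m+n) = (0:ℤ) by ring,
          zpow_zero, Equiv.Perm.one_apply]
      have h5 : (ε ^ (-(m+n)) : Equiv.Perm ℝ) y = (ε * ε : Equiv.Perm ℝ) 0 := by
        show (ε ^ (-(m+n)) : Equiv.Perm ℝ) ((ε ^ (m + n + 2) : Equiv.Perm ℝ) 0) = _
        rw [← Equiv.Perm.mul_apply, ← zpow_add, show -(m+n)+(m+n+2) = (1:ℤ)+1 by ring,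
          zpow_add, zpow_one]
      rw [h4, h5] at h3
      exact h3
    exact absurd (lt_of_le_of_lt hεδ (lt_of_lt_of_le step1 step2)) (lt_irrefl _)
  · -- δ is a least positive element: the centralizer is cyclic generated by δ.
    push_neg at hA
    have hmin' : ∀ ρ ∈ Zc G, 0 < ρ 0 → δ 0 ≤ ρ 0 := by
      intro ρ hρZ hρ0
      by_contra hc
      push_neg at hc
      set y : Equiv.Perm ℝ := δ * ρ⁻¹ with hy
      have hyZ : y ∈ Zc G := mul_mem hδZ (inv_mem hρZ)
      have hρδ : ∀ x, ρ x < δ x := Zc_lt_ext hmin hρZ hδZ hc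
      have hy0 : 0 < y 0 := by
        have := hρδ (ρ⁻¹ 0)
        rw [perm_apply_inv_self] at this
        simpa [hy, Equiv.Perm.mul_apply] using this
      have hAy := hA y hyZ hy0
      have hAρ := hA ρ hρZ hρ0
      have hρρ : ∀ x, δ x < (ρ * ρ : Equiv.Perm ℝ) x :=
        Zc_lt_ext hmin hδZ (mul_mem hρZ hρZ) hAρ
      have h1 : δ (ρ⁻¹ 0) < ρ 0 := by
        have h := hρρ (ρ⁻¹ 0)
        rw [show (ρ * ρ : Equiv.Perm ℝ) (ρ⁻¹ 0) = ρ 0 from by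
          rw [Equiv.Perm.mul_apply, perm_apply_inv_self]] at h
        exact h
      have h2 : ρ⁻¹ (δ (ρ⁻¹ 0)) ≤ ρ⁻¹ (ρ 0) := (perm_inv_sm hρZ.1).monotone h1.le
      rw [perm_inv_apply_self] at h2
      have h3 : δ (ρ⁻¹ (δ (ρ⁻¹ 0))) ≤ δ 0 := hδZ.1.monotone h2
      have h4 : (y * y : Equiv.Perm ℝ) 0 = δ (ρ⁻¹ (δ (ρ⁻¹ 0))) := by
        simp [hy, Equiv.Perm.mul_apply]
      rw [h4] at hAy
      exact absurd (lt_of_lt_of_le hAy h3) (lt_irrefl _)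
    -- every element of the centralizer is a power of δ
    have hcyc : ∀ c ∈ Zc G, ∃ m : ℤ, c = δ ^ m := by
      intro c hcZ
      obtain ⟨m, hm1, hm2⟩ := Zc_floor hmin hδZ hδup hcZ
      set r : Equiv.Perm ℝ := (δ ^ m)⁻¹ * c with hr
      have hrZ : r ∈ Zc G := mul_mem (inv_mem (zpow_mem hδZ _)) hcZ
      have hr0a : 0 ≤ r 0 := by
        have h1 : (δ ^ m : Equiv.Perm ℝ)⁻¹ ((δ ^ m : Equiv.Perm ℝ) 0)
            ≤ (δ ^ m : Equiv.Perm ℝ)⁻¹ (c 0) := (perm_inv_sm (zpow_mem hδZ m).1).monotone hm1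
        rw [perm_inv_apply_self] at h1
        simpa [hr, Equiv.Perm.mul_apply] using h1
      have hr0b : r 0 < δ 0 := by
        have h1 : (δ ^ m : Equiv.Perm ℝ)⁻¹ (c 0)
            < (δ ^ m : Equiv.Perm ℝ)⁻¹ ((δ ^ (m+1) : Equiv.Perm ℝ) 0) :=
          perm_inv_sm (zpow_mem hδZ m).1 hm2
        have h2 : (δ ^ m : Equiv.Perm ℝ)⁻¹ ((δ ^ (m+1) : Equiv.Perm ℝ) 0) = δ 0 := by
          rw [← Equiv.Perm.mul_apply, ← zpow_neg, ← zpow_add]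
          norm_num
        rw [h2] at h1
        simpa [hr, Equiv.Perm.mul_apply] using h1
      have hr0 : r 0 = 0 := by
        rcases lt_or_eq_of_le hr0a with h | h
        · exact absurd (lt_of_le_of_lt (hmin' r hrZ h) hr0b) (lt_irrefl _)
        · exact h.symm
      have : r = 1 := Zc_free hmin hrZ (x := 0) hr0
      rw [hr] at this
      exact ⟨m, (inv_mul_eq_one.mp this).symm⟩
    obtain ⟨p, hp⟩ := hcyc a ha
    obtain ⟨q, hq⟩ := hcyc b hb
    have : δ = 1 := by
      rw [hδdef, hp, hq]
      group
    rw [this] at hδ0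
    simp at hδ0

/-- The centralizer is abelian. -/
private lemma Zc_comm {ζ η : Equiv.Perm ℝ} (hζ : ζ ∈ Zc G) (hη : η ∈ Zc G) :
    ζ * η = η * ζ := by
  set c : Equiv.Perm ℝ := ζ⁻¹ * η⁻¹ * ζ * η with hc
  have hcZ : c ∈ Zc G := mul_mem (mul_mem (mul_mem (inv_mem hζ) (inv_mem hη)) hζ) hη
  have h1 : ¬ (0 < c 0) := Zc_key hmin hζ hη
  have h2 : ¬ (0 < (η⁻¹ * ζ⁻¹ * η * ζ : Equiv.Perm ℝ) 0) := Zc_key hmin hη hζ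
  have hcinv : (η⁻¹ * ζ⁻¹ * η * ζ : Equiv.Perm ℝ) = c⁻¹ := by rw [hc]; group
  rw [hcinv] at h2
  push_neg at h1 h2
  have h3 : c (c⁻¹ 0) ≤ c 0 := hcZ.1.monotone h2
  rw [perm_apply_inv_self] at h3
  have hc0 : c 0 = 0 := le_antisymm h1 h3
  have hc1 : c = 1 := Zc_free hmin hcZ (x := 0) hc0
  calc ζ * η = η * ζ * c := by rw [hc]; group
  _ = η * ζ := by rw [hc1, mul_one]

end CentralizerHelpers

/-- Let `G` be a subgroup of `Homeo₊(ℝ)` (encoded as a subgroup of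
`Equiv.Perm ℝ` all of whose elements are strictly monotone) acting minimally on `ℝ`
(every orbit is dense), and let `Z` be the centralizer of `G` in `Homeo₊(ℝ)`. Then every
nonidentity element of `Z` acts freely on `ℝ`, and `Z` is abelian. -/
theorem centralizer_of_minimal_action_free_and_abelian
    (G : Subgroup (Equiv.Perm ℝ))
    (hmono : ∀ g ∈ G, StrictMono ⇑g)
    (hmin : ∀ x : ℝ, Dense {y : ℝ | ∃ g ∈ G, g x = y}) :
    (∀ ζ : Equiv.Perm ℝ, StrictMono ⇑ζ → (∀ g ∈ G, ζ * g = g * ζ) → ζ ≠ 1 →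
      ∀ x : ℝ, ζ x ≠ x) ∧
    (∀ ζ η : Equiv.Perm ℝ, StrictMono ⇑ζ → (∀ g ∈ G, ζ * g = g * ζ) →
      StrictMono ⇑η → (∀ g ∈ G, η * g = g * η) → ζ * η = η * ζ) := by
  constructor
  · intro ζ hsm hcomm hne x hx
    exact hne (Zc_free hmin (mem_Zc.mpr ⟨hsm, hcomm⟩) hx)
  · intro ζ η hζsm hζc hηsm hηc
    exact Zc_comm hmin (mem_Zc.mpr ⟨hζsm, hζc⟩) (mem_Zc.mpr ⟨hηsm, hηc⟩)
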